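/- For every 1 ≤ j ≤ I−2 and every t ∈ [τ(j), T], one has μ(t)/κ(t) + γ(t)·a(j) + θ(j)_{0−} − θ(j)(t) = ((I−j+1)/(I−j))·A(j)·(γ(t) − γ(τ(j))) + Σ_{k=j+1}^{I−2} (A(k)/(I−k))·(γ(max(t, τ(k))) − γ(τ(k))). -/
import Mathlib


open MeasureTheory

/-- `a_Σ^{≥j} = Σ_{k=j}^{I} a(k)`. -/
noncomputable def aSig (I : ℕ) (a : ℕ → ℝ) (j : ℕ) : ℝ :=
  ∑ k ∈ Finset.Icc j I, a k

/-- `A(j) = a(j) − a_Σ^{≥j}/(I−j+1)` for `j ≤ I−1`, and `A(I) = a(I) − a_Σ^{≥I−1}/2`. -/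
noncomputable def Acoef (I : ℕ) (a : ℕ → ℝ) (j : ℕ) : ℝ :=
  if j = I then a I - aSig I a (I - 1) / 2
  else a j - aSig I a j / ((I : ℝ) - (j : ℝ) + 1)

/-- The largest index `j ≤ I−2` with `τ(j) ≤ t` (and `0` if none). -/
noncomputable def lastIdx (I : ℕ) (τ : ℕ → ℝ) (t : ℝ) : ℕ :=
  (Finset.filter (fun j => τ j ≤ t) (Finset.range (I - 1))).sup id

/-- The candidate equilibrium stock price drift `μ`, defined piecewise:
for `t ∈ [τ(j), τ(j+1))` (with `0 ≤ j ≤ I−2` the largest index with `τ(j) ≤ t`),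
`μ(t) = −κ(t)·(γ(t)·a_Σ^{≥j+1}/(I−j) + Σ_{k=1}^{j} γ(τ(k))·A(k)/(I−k))`, and
for `t ∈ [τ(I−1), T]`,
`μ(t) = −κ(t)·(γ(t)·a_Σ^{≥I−1}/2 + Σ_{k=1}^{I−2} γ(τ(k))·A(k)/(I−k))`. -/
noncomputable def muDrift (κ γ : ℝ → ℝ) (I : ℕ) (a : ℕ → ℝ) (τ : ℕ → ℝ) (t : ℝ) : ℝ :=
  if t < τ (I - 1) then
    -(κ t) * (γ t * aSig I a (lastIdx I τ t + 1) / ((I : ℝ) - (lastIdx I τ t : ℝ))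
      + ∑ k ∈ Finset.Icc 1 (lastIdx I τ t), γ (τ k) * Acoef I a k / ((I : ℝ) - (k : ℝ)))
  else
    -(κ t) * (γ t * aSig I a (I - 1) / 2
      + ∑ k ∈ Finset.Icc 1 (I - 2), γ (τ k) * Acoef I a k / ((I : ℝ) - (k : ℝ)))

/-- Agent `(j)`'s candidate optimal trading strategy:
`θ(j)(t) = θ(j)_{0−} + μ(t)/κ(t) + γ(t)·a(j)` for `t ≤ τ(j)`, frozen afterwards. -/
noncomputable def thetaEq (κ γ : ℝ → ℝ) (I : ℕ) (a : ℕ → ℝ) (τ : ℕ → ℝ)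
    (θ0 : ℕ → ℝ) (j : ℕ) (t : ℝ) : ℝ :=
  if t ≤ τ j then θ0 j + muDrift κ γ I a τ t / κ t + γ t * a j
  else θ0 j + muDrift κ γ I a τ (τ j) / κ (τ j) + γ (τ j) * a j

noncomputable def Gfun (I : ℕ) (a : ℕ → ℝ) (y : ℕ → ℝ) (m : ℕ) (x : ℝ) : ℝ :=
  x * aSig I a (m + 1) / ((I : ℝ) - (m : ℝ))
    + ∑ k ∈ Finset.Icc 1 m, y k * Acoef I a k / ((I : ℝ) - (k : ℝ))
lemma aSig_succ (I : ℕ) (a : ℕ → ℝ) (j : ℕ) (h : j ≤ I) :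
    aSig I a j = a j + aSig I a (j + 1) := by
  unfold aSig
  rw [← Finset.Ioc_insert_left h, Finset.sum_insert (by simp), Finset.Icc_add_one_left_eq_Ioc]

lemma G_step (I : ℕ) (a y : ℕ → ℝ) (m : ℕ) (x : ℝ) (hI : 3 ≤ I) (hm : m + 1 ≤ I - 1) :
    Gfun I a y (m + 1) x
      = Gfun I a y m x + Acoef I a (m + 1) / ((I : ℝ) - ((m : ℝ) + 1)) * (y (m + 1) - x) := by
  have h1 : ((m : ℝ) + 2) ≤ (I : ℝ) := by exact_mod_cast (by omega : m + 2 ≤ I)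
  have hne1 : (I : ℝ) - (m : ℝ) ≠ 0 := by linarith
  have hne2 : (I : ℝ) - ((m : ℝ) + 1) ≠ 0 := by linarith
  have hA : Acoef I a (m + 1)
      = a (m + 1) - (a (m + 1) + aSig I a (m + 2)) / ((I : ℝ) - (m : ℝ)) := by
    unfold Acoef
    rw [if_neg (by omega : ¬ m + 1 = I), ← aSig_succ I a (m + 1) (by omega)]
    push_cast
    ring_nf
  unfold Gfun
  rw [Finset.sum_Icc_succ_top (by omega : 1 ≤ m + 1), aSig_succ I a (m + 1) (by omega), hA]
  push_cast
  set S := ∑ k ∈ Finset.Icc 1 m, y k * Acoef I a k / ((I : ℝ) - (k : ℝ)) with hS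
  set B := aSig I a (m + 1 + 1) with hB
  set c := a (m + 1)
  set z := y (m + 1)
  field_simp
  ring

lemma G_tele (I : ℕ) (a y : ℕ → ℝ) (x : ℝ) (hI : 3 ≤ I) (j : ℕ) :
    ∀ m, j ≤ m → m ≤ I - 1 →
      Gfun I a y m x = Gfun I a y j x
        + ∑ k ∈ Finset.Icc (j + 1) m, Acoef I a k / ((I : ℝ) - (k : ℝ)) * (y k - x) := by
  intro m
  induction m with
  | zero => intro h1 h2; interval_cases j; simp
  | succ n ih =>
    intro h1 h2
    rcases Nat.lt_or_ge j (n + 1) with h | h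
    · have hjn : j ≤ n := by omega
      rw [G_step I a y n x hI (by omega), ih hjn (by omega),
        Finset.sum_Icc_succ_top (by omega : j + 1 ≤ n + 1)]
      push_cast
      ring
    · have : j = n + 1 := by omega
      subst this
      simp

lemma lastIdx_le (I : ℕ) (τ : ℕ → ℝ) (t : ℝ) : lastIdx I τ t ≤ I - 2 := by
  unfold lastIdx
  apply Finset.sup_le
  intro b hb
  simp only [Finset.mem_filter, Finset.mem_range] at hb
  simp only [id]
  omega

lemma le_lastIdx (I : ℕ) (τ : ℕ → ℝ) (t : ℝ) (k : ℕ) (hk : k < I - 1) (hτk : τ k ≤ t) :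
    k ≤ lastIdx I τ t := by
  unfold lastIdx
  exact Finset.le_sup (f := id) (by simp [Finset.mem_filter, Finset.mem_range, hk, hτk])

lemma τ_lastIdx_le (I : ℕ) (τ : ℕ → ℝ) (t : ℝ) (hI : 3 ≤ I) (h0 : τ 0 ≤ t) :
    τ (lastIdx I τ t) ≤ t := by
  obtain ⟨b, hb, hbe⟩ := Finset.exists_mem_eq_sup
    (Finset.filter (fun j => τ j ≤ t) (Finset.range (I - 1)))
    ⟨0, by simp only [Finset.mem_filter, Finset.mem_range]; exact ⟨by omega, h0⟩⟩ id
  unfold lastIdx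
  rw [hbe]
  simp only [Finset.mem_filter, Finset.mem_range] at hb
  exact hb.2

lemma muDrift_eq (κ γ : ℝ → ℝ) (I : ℕ) (a : ℕ → ℝ) (τ : ℕ → ℝ) (hI : 3 ≤ I) (t : ℝ) :
    muDrift κ γ I a τ t
      = -(κ t) * Gfun I a (fun k => γ (τ k))
          (if t < τ (I - 1) then lastIdx I τ t else I - 2) (γ t) := by
  unfold muDrift Gfun
  split_ifs with h
  · rfl
  · have h1 : I - 2 + 1 = I - 1 := by omega
    have h2 : ((I - 2 : ℕ) : ℝ) = (I : ℝ) - 2 := by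
      push_cast [Nat.cast_sub (by omega : 2 ≤ I)]
      ring
    rw [h1, h2]
    norm_num

lemma coef_eq (I : ℕ) (a : ℕ → ℝ) (j : ℕ) (hI : 3 ≤ I) (hj : j ≤ I - 2) :
    ((I : ℝ) - (j : ℝ) + 1) / ((I : ℝ) - (j : ℝ)) * Acoef I a j
      = a j - aSig I a (j + 1) / ((I : ℝ) - (j : ℝ)) := by
  have h1 : ((j : ℝ) + 2) ≤ (I : ℝ) := by exact_mod_cast (by omega : j + 2 ≤ I)
  have hne1 : (I : ℝ) - (j : ℝ) ≠ 0 := by linarith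
  have hne2 : (I : ℝ) - (j : ℝ) + 1 ≠ 0 := by linarith
  unfold Acoef
  rw [if_neg (by omega : ¬ j = I), aSig_succ I a j (by omega)]
  field_simp
  ring

/-- for `1 ≤ j ≤ I−2` and `t ∈ [τ(j), T]`,
`μ(t)/κ(t) + γ(t)·a(j) + θ(j)_{0−} − θ(j)(t)
  = ((I−j+1)/(I−j))·A(j)·(γ(t) − γ(τ(j)))
    + Σ_{k=j+1}^{I−2} (A(k)/(I−k))·(γ(max(t,τ(k))) − γ(τ(k)))`. -/
theorem stmt10 (T : ℝ) (κ γ : ℝ → ℝ) (hT : 0 < T)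
    (hκcont : ContinuousOn κ (Set.Icc 0 T))
    (hκpos : ∀ t ∈ Set.Icc (0 : ℝ) T, 0 < κ t)
    (hγcont : ContinuousOn γ (Set.Icc 0 T))
    (hγmono : StrictMonoOn γ (Set.Icc 0 T))
    (hγ0 : γ 0 = 0) (hγT : γ T = 1)
    (I : ℕ) (hI : 3 ≤ I) (a : ℕ → ℝ) (τ : ℕ → ℝ)
    (hτ0 : τ 0 = 0) (hτmono : ∀ j k : ℕ, j ≤ k → k ≤ I → τ j ≤ τ k)
    (hτlast : τ (I - 1) = τ I) (hτT : τ (I - 1) < T)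
    (θ0 : ℕ → ℝ) :
    ∀ j : ℕ, 1 ≤ j → j ≤ I - 2 → ∀ t ∈ Set.Icc (τ j) T,
      muDrift κ γ I a τ t / κ t + γ t * a j + θ0 j - thetaEq κ γ I a τ θ0 j t
        = ((I : ℝ) - (j : ℝ) + 1) / ((I : ℝ) - (j : ℝ)) * Acoef I a j * (γ t - γ (τ j))
          + ∑ k ∈ Finset.Icc (j + 1) (I - 2),
              Acoef I a k / ((I : ℝ) - (k : ℝ)) * (γ (max t (τ k)) - γ (τ k)) := by
  intro j hj1 hj2 t ht
  obtain ⟨htl, htr⟩ := ht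
  have hτj0 : (0 : ℝ) ≤ τ j := by rw [← hτ0]; exact hτmono 0 j (by omega) (by omega)
  have ht0 : (0 : ℝ) ≤ t := le_trans hτj0 htl
  have hτjT : τ j ≤ T :=
    le_trans (hτmono j (I - 1) (by omega) (by omega)) hτT.le
  have hκt : κ t ≠ 0 := ne_of_gt (hκpos t ⟨ht0, htr⟩)
  have hκs : κ (τ j) ≠ 0 := ne_of_gt (hκpos (τ j) ⟨hτj0, hτjT⟩)
  set m := if t < τ (I - 1) then lastIdx I τ t else I - 2 with hmdef
  set m0 := if τ j < τ (I - 1) then lastIdx I τ (τ j) else I - 2 with hm0def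
  have hm2 : m ≤ I - 2 := by
    rw [hmdef]; split_ifs; exacts [lastIdx_le I τ t, le_refl _]
  have hm02 : m0 ≤ I - 2 := by
    rw [hm0def]; split_ifs; exacts [lastIdx_le I τ (τ j), le_refl _]
  have hτm : ∀ k, k ≤ m → τ k ≤ t := by
    intro k hk
    rw [hmdef] at hk; split_ifs at hk with h
    · exact le_trans (hτmono k _ hk (by have := lastIdx_le I τ t; omega))
        (τ_lastIdx_le I τ t hI (hτ0 ▸ ht0))
    · exact le_trans (hτmono k (I - 1) (by omega) (by omega)) (not_lt.mp h)
  have hτm0 : ∀ k, k ≤ m0 → τ k ≤ τ j := by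
    intro k hk
    rw [hm0def] at hk; split_ifs at hk with h
    · exact le_trans (hτmono k _ hk (by have := lastIdx_le I τ (τ j); omega))
        (τ_lastIdx_le I τ (τ j) hI (hτ0 ▸ hτj0))
    · exact le_trans (hτmono k (I - 1) (by omega) (by omega)) (not_lt.mp h)
  have hmem : ∀ k, k ≤ I - 2 → τ k ≤ t → k ≤ m := by
    intro k hk hτk; rw [hmdef]; split_ifs with h
    · exact le_lastIdx I τ t k (by omega) hτk
    · exact hk
  have hjm : j ≤ m := hmem j hj2 htl
  have hjm0 : j ≤ m0 := by
    rw [hm0def]; split_ifs with h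
    · exact le_lastIdx I τ (τ j) j (by omega) le_rfl
    · exact hj2
  have e1 : muDrift κ γ I a τ t / κ t = -Gfun I a (fun k => γ (τ k)) m (γ t) := by
    rw [muDrift_eq κ γ I a τ hI t, ← hmdef, neg_mul, neg_div,
      mul_div_cancel_left₀ _ hκt]
  have e2 : muDrift κ γ I a τ (τ j) / κ (τ j)
      = -Gfun I a (fun k => γ (τ k)) m0 (γ (τ j)) := by
    rw [muDrift_eq κ γ I a τ hI (τ j), ← hm0def, neg_mul, neg_div,
      mul_div_cancel_left₀ _ hκs]
  have e3 : thetaEq κ γ I a τ θ0 j t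
      = θ0 j + muDrift κ γ I a τ (τ j) / κ (τ j) + γ (τ j) * a j := by
    unfold thetaEq; split_ifs with h
    · rw [le_antisymm h htl]
    · rfl
  have e4 : Gfun I a (fun k => γ (τ k)) m0 (γ (τ j))
      = Gfun I a (fun k => γ (τ k)) j (γ (τ j)) := by
    rw [G_tele I a (fun k => γ (τ k)) (γ (τ j)) hI j m0 hjm0 (by omega)]
    have hz : ∑ k ∈ Finset.Icc (j + 1) m0,
        Acoef I a k / ((I : ℝ) - (k : ℝ)) * (γ (τ k) - γ (τ j)) = 0 := by
      apply Finset.sum_eq_zero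
      intro k hk
      simp only [Finset.mem_Icc] at hk
      have h1 : τ k = τ j :=
        le_antisymm (hτm0 k hk.2) (hτmono j k (by omega) (by omega))
      rw [h1]; ring
    rw [hz]; ring
  have e5 : Gfun I a (fun k => γ (τ k)) m (γ t)
      = Gfun I a (fun k => γ (τ k)) j (γ t)
        + ∑ k ∈ Finset.Ioc j m,
            Acoef I a k / ((I : ℝ) - (k : ℝ)) * (γ (τ k) - γ t) := by
    rw [G_tele I a (fun k => γ (τ k)) (γ t) hI j m hjm (by omega), Finset.Icc_add_one_left_eq_Ioc]
  have e6 : ∑ k ∈ Finset.Icc (j + 1) (I - 2),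
        Acoef I a k / ((I : ℝ) - (k : ℝ)) * (γ (max t (τ k)) - γ (τ k))
      = ∑ k ∈ Finset.Ioc j m,
          Acoef I a k / ((I : ℝ) - (k : ℝ)) * (γ t - γ (τ k)) := by
    rw [Finset.Icc_add_one_left_eq_Ioc, ← Finset.sum_Ioc_consecutive _ hjm hm2]
    have hz : ∑ k ∈ Finset.Ioc m (I - 2),
        Acoef I a k / ((I : ℝ) - (k : ℝ)) * (γ (max t (τ k)) - γ (τ k)) = 0 := by
      apply Finset.sum_eq_zero
      intro k hk
      simp only [Finset.mem_Ioc] at hk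
      have h1 : ¬ τ k ≤ t := fun hc => absurd (hmem k hk.2 hc) (by omega)
      rw [max_eq_right (le_of_not_ge h1)]
      ring
    rw [hz, add_zero]
    apply Finset.sum_congr rfl
    intro k hk
    simp only [Finset.mem_Ioc] at hk
    rw [max_eq_left (hτm k hk.2)]
  rw [e1, e3, e2, e4, e5, e6, coef_eq I a j hI hj2]
  unfold Gfun
  have e7 : ∑ k ∈ Finset.Ioc j m,
      Acoef I a k / ((I : ℝ) - (k : ℝ)) * (γ (τ k) - γ t)
      = - ∑ k ∈ Finset.Ioc j m,
          Acoef I a k / ((I : ℝ) - (k : ℝ)) * (γ t - γ (τ k)) := by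
    rw [← Finset.sum_neg_distrib]
    apply Finset.sum_congr rfl
    intros; ring
  rw [e7]
  ring
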